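/- For a prime p and positive integers n, k with n not dividing k+1, the set of elements of the form a·b^{p^k} - b·a^{p} with a, b ∈ F_{p^n} spans F_{p^n} as an F_p-vector space; i.e., there exist a, b with tr(a·b^{p^k} - b·a^p) ≠ 0. -/

import Mathlib

/-- For a prime `p` and positive integers `n, k` with `n ∤ k + 1`, there exist
`a, b ∈ F_{p^n}` with `tr(a·b^(p^k) - b·a^p) ≠ 0`. -/
theorem exists_trace_commutator_ne_zero (p n k : ℕ) [Fact p.Prime] (hn : 0 < n) (hk : 0 < k)
    (hndvd : ¬ n ∣ (k + 1)) :
    ∃ a b : GaloisField p n,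
      Algebra.trace (ZMod p) (GaloisField p n) (a * b ^ p ^ k - b * a ^ p) ≠ 0 := by
  classical
  set F := GaloisField p n with hF
  have hp : p.Prime := Fact.out
  have hp1 : 1 < p := hp.one_lt
  by_contra h
  push_neg at h
  -- frobenius as an algebra equivalence
  have hfrobbij : Function.Bijective (frobenius F p) :=
    (Finite.injective_iff_bijective).mp (frobenius_inj F p)
  let e : F ≃ₐ[ZMod p] F :=
    AlgEquiv.ofBijective
      { toRingHom := frobenius F p
        commutes' := fun r => by
          show frobenius F p _ = _
          rw [frobenius_def, ← map_pow, ZMod.pow_card] }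
      hfrobbij
  have htrp : ∀ x : F, Algebra.trace (ZMod p) F (x ^ p) = Algebra.trace (ZMod p) F x := by
    intro x
    have := Algebra.trace_eq_of_algEquiv e x
    simpa [e, frobenius_def] using this
  -- every element satisfies x ^ p ^ (k+1) = x
  have key : ∀ c : F, c ^ p ^ (k + 1) = c := by
    intro c
    have hall : ∀ a : F, Algebra.traceForm (ZMod p) F (c ^ p ^ (k + 1) - c) a = 0 := by
      intro a
      have h1 := h a (c ^ p)
      rw [map_sub, sub_eq_zero] at h1
      have h2 : (c ^ p) ^ p ^ k = c ^ p ^ (k + 1) := by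
        rw [← pow_mul, ← pow_succ']
      have h3 : c ^ p * a ^ p = (c * a) ^ p := by ring
      have h4 : Algebra.trace (ZMod p) F (a * c ^ p ^ (k + 1)) =
          Algebra.trace (ZMod p) F (c * a) := by
        rw [h2] at h1
        rw [h1, h3, htrp]
      simp only [Algebra.traceForm_apply]
      rw [sub_mul, map_sub, mul_comm (c ^ p ^ (k + 1)) a, h4, mul_comm c a, sub_self]
    exact sub_eq_zero.mp ((traceForm_nondegenerate (ZMod p) F).1 (c ^ p ^ (k + 1) - c) hall)
  -- reduce the exponent mod n
  set r := (k + 1) % n with hr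
  have hr0 : r ≠ 0 := fun h0 => hndvd (Nat.dvd_of_mod_eq_zero h0)
  have hrn : r < n := Nat.mod_lt _ hn
  have hcard : Nat.card F = p ^ n := GaloisField.card p n hn.ne'
  have : Fintype F := Fintype.ofFinite F
  have hcard' : Fintype.card F = p ^ n := by
    rw [← Nat.card_eq_fintype_card, hcard]
  have key' : ∀ c : F, c ^ p ^ r = c := by
    intro c
    have hdec : k + 1 = n * ((k + 1) / n) + r := (Nat.div_add_mod (k + 1) n).symm
    have hc : c ^ p ^ (n * ((k + 1) / n)) = c := by
      rw [pow_mul, ← hcard']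
      exact FiniteField.pow_card_pow _ _
    calc c ^ p ^ r = (c ^ p ^ (n * ((k + 1) / n))) ^ p ^ r := by rw [hc]
      _ = c ^ p ^ (k + 1) := by rw [← pow_mul, ← pow_add, ← hdec]
      _ = c := key c
  -- contradiction by counting roots of X ^ p ^ r - X
  have hfne : (Polynomial.X ^ p ^ r - Polynomial.X : Polynomial F) ≠ 0 :=
    FiniteField.X_pow_card_pow_sub_X_ne_zero F hr0 hp1
  have hdeg : (Polynomial.X ^ p ^ r - Polynomial.X : Polynomial F).natDegree = p ^ r :=
    FiniteField.X_pow_card_pow_sub_X_natDegree_eq F hr0 hp1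
  have hsub : (Finset.univ : Finset F) ⊆
      (Polynomial.X ^ p ^ r - Polynomial.X : Polynomial F).roots.toFinset := by
    intro x _
    rw [Multiset.mem_toFinset, Polynomial.mem_roots hfne]
    simp [Polynomial.IsRoot, key' x]
  have hle : p ^ n ≤ p ^ r := by
    calc p ^ n = Fintype.card F := hcard'.symm
    _ = (Finset.univ : Finset F).card := Finset.card_univ.symm
    _ ≤ (Polynomial.X ^ p ^ r - Polynomial.X : Polynomial F).roots.toFinset.card :=
        Finset.card_le_card hsub
    _ ≤ Multiset.card (Polynomial.X ^ p ^ r - Polynomial.X : Polynomial F).roots :=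
        Multiset.toFinset_card_le _
    _ ≤ (Polynomial.X ^ p ^ r - Polynomial.X : Polynomial F).natDegree :=
        Polynomial.card_roots' _
    _ = p ^ r := hdeg
  have : n ≤ r := (pow_le_pow_iff_right₀ hp1).mp hle
  omega
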